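/- In the superman-kryptonite tournament T on n agents, under the Randomized Death Match rule, agent 1 wins with probability 1 − 2/n and agent n wins with probability 2/(n(n−1)). -/

import Mathlib

open Classical Finset

structure Tournament (n : ℕ) where
  beats : Fin n → Fin n → Prop
  irrefl : ∀ i, ¬ beats i i
  total : ∀ i j, i ≠ j → (beats i j ↔ ¬ beats j i)

/-- `r` maps each tournament to a probability distribution over the agents. -/
def IsProbRule {n : ℕ} (r : Tournament n → Fin n → ℝ) : Prop :=
  ∀ T, (∀ i, 0 ≤ r T i) ∧ ∑ i, r T i = 1

/-- `T` and `T'` agree on all matches except possibly the one between `i` and `j`. -/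
def Adjacent {n : ℕ} (i j : Fin n) (T T' : Tournament n) : Prop :=
  ∀ a b, ¬((a = i ∧ b = j) ∨ (a = j ∧ b = i)) → (T.beats a b ↔ T'.beats a b)

def CondorcetConsistent {n : ℕ} (r : Tournament n → Fin n → ℝ) : Prop :=
  ∀ T i, (∀ j, j ≠ i → T.beats i j) → r T i = 1

def MonotoneRule {n : ℕ} (r : Tournament n → Fin n → ℝ) : Prop :=
  ∀ i j (T T' : Tournament n), i ≠ j → Adjacent i j T T' → T ≠ T' →
    T.beats i j → r T' i ≤ r T i

/-- 2-NM_λ-α. -/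
def TwoNM {n : ℕ} (lam alpha : ℝ) (r : Tournament n → Fin n → ℝ) : Prop :=
  ∀ i j (T T' : Tournament n), i ≠ j → Adjacent i j T T' → T ≠ T' →
    r T' i + r T' j ≤
      r T i + r T j + lam * max (r T i - r T' i) (r T j - r T' j) + alpha
/-- The probability that agent `i` wins the Randomized Death Match among the
remaining agents `S`: repeatedly a uniformly random ordered pair of distinct
remaining agents is chosen and the loser of their match is eliminated, until one
agent remains. -/
noncomputable def rdmProb {n : ℕ} (T : Tournament n) (S : Finset (Fin n))
    (i : Fin n) : ℝ :=
  if h : S.card ≤ 1 then (if i ∈ S then 1 else 0)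
  else ((S.card * (S.card - 1) : ℕ) : ℝ)⁻¹ *
    ∑ p ∈ S.offDiag.attach,
      rdmProb T (S.erase (if T.beats p.1.1 p.1.2 then p.1.2 else p.1.1)) i
termination_by S.card
decreasing_by
  · have hp := Finset.mem_offDiag.mp p.2
    exact Finset.card_erase_lt_of_mem (by split <;> tauto)

/- ------------------ auxiliary lemmas ------------------ -/

lemma offDiag_sum_eq {α β : Type*} [DecidableEq α] [AddCommMonoid β] (s : Finset α)
    (f : α → α → β) :
    ∑ p ∈ s.offDiag, f p.1 p.2 = ∑ a ∈ s, ∑ b ∈ s.erase a, f a b := by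
  rw [show s.offDiag = (s ×ˢ s).filter (fun a : α × α => a.1 ≠ a.2) by ext; simp [and_assoc], Finset.sum_filter, Finset.sum_product]
  refine Finset.sum_congr rfl fun a ha => ?_
  simp only [← Finset.sum_filter]
  congr 1
  ext b
  simp [Finset.mem_erase, eq_comm, and_comm]

lemma offDiag_card_eq {α : Type*} [DecidableEq α] (s : Finset α) :
    s.offDiag.card = s.card * (s.card - 1) := by
  rw [Finset.offDiag_card]
  rcases s.card with _ | c
  · rfl
  · simp [Nat.succ_sub_one, Nat.mul_succ, Nat.succ_mul]

lemma rdm_rec {n : ℕ} (T : Tournament n) (S : Finset (Fin n)) (i : Fin n)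
    (h : ¬ S.card ≤ 1) :
    rdmProb T S i = ((S.card * (S.card - 1) : ℕ) : ℝ)⁻¹ *
      ∑ a ∈ S, ∑ b ∈ S.erase a,
        rdmProb T (S.erase (if T.beats a b then b else a)) i := by
  rw [rdmProb, dif_neg h]
  congr 1
  exact (Finset.sum_attach S.offDiag (fun p : Fin n × Fin n =>
    rdmProb T (S.erase (if T.beats p.1 p.2 then p.2 else p.1)) i)).trans
    (offDiag_sum_eq S (fun a b =>
      rdmProb T (S.erase (if T.beats a b then b else a)) i))

lemma rdm_not_mem {n : ℕ} (T : Tournament n) :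
    ∀ S : Finset (Fin n), ∀ i, i ∉ S → rdmProb T S i = 0 := by
  intro S
  induction S using Finset.strongInduction with
  | _ S ih =>
    intro i hi
    rw [rdmProb]
    split_ifs with h
    · simp [hi]
    · rw [Finset.sum_eq_zero, mul_zero]
      intro p _
      have hp := Finset.mem_offDiag.mp p.2
      refine ih _ (Finset.erase_ssubset ?_) i fun h' => hi (Finset.mem_of_mem_erase h')
      split <;> tauto

lemma rdm_condorcet {n : ℕ} (T : Tournament n) :
    ∀ S : Finset (Fin n), ∀ i, i ∈ S → (∀ j ∈ S, j ≠ i → T.beats i j) →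
      rdmProb T S i = 1 := by
  intro S
  induction S using Finset.strongInduction with
  | _ S ih =>
    intro i hi hc
    rw [rdmProb]
    split_ifs with h
    · simp [hi]
    · have hone : ∀ p ∈ S.offDiag.attach,
          rdmProb T (S.erase (if T.beats (p : Fin n × Fin n).1 (p : Fin n × Fin n).2
            then (p : Fin n × Fin n).2 else (p : Fin n × Fin n).1)) i = 1 := by
        intro p _
        obtain ⟨ha, hb, hab⟩ := Finset.mem_offDiag.mp p.2
        have hwi : (if T.beats (p : Fin n × Fin n).1 (p : Fin n × Fin n).2
            then (p : Fin n × Fin n).2 else (p : Fin n × Fin n).1) ≠ i := by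
          split_ifs with hbeat
          · intro he
            rw [he] at hbeat hab
            exact (T.total _ i hab).mp hbeat (hc _ ha hab)
          · intro he
            rw [he] at hbeat hab
            exact hbeat (hc _ hb (Ne.symm hab))
        have hwS : (if T.beats (p : Fin n × Fin n).1 (p : Fin n × Fin n).2
            then (p : Fin n × Fin n).2 else (p : Fin n × Fin n).1) ∈ S := by
          split <;> tauto
        refine ih _ (Finset.erase_ssubset hwS) i
          (Finset.mem_erase.mpr ⟨Ne.symm hwi, hi⟩) ?_
        intro j hj hji
        exact hc j (Finset.mem_of_mem_erase hj) hji
      rw [Finset.sum_congr rfl hone, Finset.sum_const, Finset.card_attach,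
        offDiag_card_eq, nsmul_eq_mul, mul_one]
      refine inv_mul_cancel₀ ?_
      have h2 : 0 < S.card * (S.card - 1) := Nat.mul_pos (by omega) (by omega)
      exact_mod_cast h2.ne'

lemma rdm_loser {n : ℕ} (T : Tournament n) :
    ∀ S : Finset (Fin n), ∀ i, i ∈ S → 2 ≤ S.card →
      (∀ j ∈ S, j ≠ i → T.beats j i) → rdmProb T S i = 0 := by
  intro S
  induction S using Finset.strongInduction with
  | _ S ih =>
    intro i hi hcard hc
    rw [rdmProb, dif_neg (by omega)]
    rw [Finset.sum_eq_zero, mul_zero]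
    intro p _
    obtain ⟨ha, hb, hab⟩ := Finset.mem_offDiag.mp p.2
    by_cases hai : (p : Fin n × Fin n).1 = i
    · have hbi : (p : Fin n × Fin n).2 ≠ i := by rw [← hai]; exact Ne.symm hab
      have hnb : ¬ T.beats (p : Fin n × Fin n).1 (p : Fin n × Fin n).2 := by
        rw [hai]
        intro hbeat
        exact (T.total i _ (Ne.symm hbi)).mp hbeat (hc _ hb hbi)
      rw [if_neg hnb, hai]
      exact rdm_not_mem T _ i (Finset.notMem_erase i S)
    · by_cases hbi : (p : Fin n × Fin n).2 = i
      · have hba : T.beats (p : Fin n × Fin n).1 (p : Fin n × Fin n).2 := by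
          rw [hbi]; exact hc _ ha hai
        rw [if_pos hba, hbi]
        exact rdm_not_mem T _ i (Finset.notMem_erase i S)
      · set w := if T.beats (p : Fin n × Fin n).1 (p : Fin n × Fin n).2
            then (p : Fin n × Fin n).2 else (p : Fin n × Fin n).1 with hw
        have hwS : w ∈ S := by rw [hw]; split <;> tauto
        have hwi : w ≠ i := by rw [hw]; split <;> assumption
        have hoth : ∃ o ∈ S.erase w, o ≠ i := by
          refine ⟨if T.beats (p : Fin n × Fin n).1 (p : Fin n × Fin n).2
            then (p : Fin n × Fin n).1 else (p : Fin n × Fin n).2,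
            Finset.mem_erase.mpr ⟨?_, by split <;> tauto⟩, by split <;> assumption⟩
          rw [hw]; split_ifs <;> [exact hab; exact Ne.symm hab]
        obtain ⟨o, ho, hoi⟩ := hoth
        refine ih _ (Finset.erase_ssubset hwS) i
          (Finset.mem_erase.mpr ⟨Ne.symm hwi, hi⟩) ?_ ?_
        · rw [show (2 : ℕ) = 1 + 1 from rfl]
          refine Finset.one_lt_card.mpr ⟨i, Finset.mem_erase.mpr ⟨Ne.symm hwi, hi⟩, o, ho, Ne.symm hoi⟩
        · intro j hj hji
          exact hc j (Finset.mem_of_mem_erase hj) hji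

lemma sum_formula {n : ℕ} (T : Tournament n) (z L : Fin n) (hzL : z ≠ L)
    (nbzL : ¬ T.beats z L) (bLz : T.beats L z)
    (bzo : ∀ j : Fin n, j ≠ z → j ≠ L → T.beats z j)
    (nbLo : ∀ j : Fin n, j ≠ z → j ≠ L → ¬ T.beats L j)
    (boL : ∀ j : Fin n, j ≠ z → j ≠ L → T.beats j L)
    (nboz : ∀ j : Fin n, j ≠ z → j ≠ L → ¬ T.beats j z)
    (S : Finset (Fin n)) (hzS : z ∈ S) (hLS : L ∈ S) (k : ℕ) (hk : S.card = k + 2)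
    (i : Fin n) (vz vL vo : ℝ)
    (hvz : rdmProb T (S.erase z) i = vz) (hvL : rdmProb T (S.erase L) i = vL)
    (hvo : ∀ x ∈ S, x ≠ z → x ≠ L → rdmProb T (S.erase x) i = vo) :
    ∑ a ∈ S, ∑ b ∈ S.erase a,
      rdmProb T (S.erase (if T.beats a b then b else a)) i
      = 2 * vz + (2 * k) * vL + (k * (k + 1)) * vo := by
  have hLz : L ∈ S.erase z := Finset.mem_erase.mpr ⟨Ne.symm hzL, hLS⟩
  have hzLe : z ∈ S.erase L := Finset.mem_erase.mpr ⟨hzL, hzS⟩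
  have hS2mem : ∀ j ∈ (S.erase z).erase L, j ∈ S ∧ j ≠ z ∧ j ≠ L := by
    intro j hj
    obtain ⟨h1, h2⟩ := Finset.mem_erase.mp hj
    obtain ⟨h3, h4⟩ := Finset.mem_erase.mp h2
    exact ⟨h4, h3, h1⟩
  have hS2card : ((S.erase z).erase L).card = k := by
    rw [Finset.card_erase_of_mem hLz, Finset.card_erase_of_mem hzS, hk]
    omega
  have rowz : ∑ b ∈ S.erase z,
      rdmProb T (S.erase (if T.beats z b then b else z)) i = vz + (k : ℝ) * vo := by
    have hcong : ∀ b ∈ (S.erase z).erase L,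
        rdmProb T (S.erase (if T.beats z b then b else z)) i = vo := by
      intro b hb
      obtain ⟨hbS, hbz, hbL⟩ := hS2mem b hb
      rw [if_pos (bzo b hbz hbL)]
      exact hvo b hbS hbz hbL
    rw [← Finset.add_sum_erase _ _ hLz, if_neg nbzL, hvz,
      Finset.sum_congr rfl hcong, Finset.sum_const, hS2card, nsmul_eq_mul]
  have rowL : ∑ b ∈ S.erase L,
      rdmProb T (S.erase (if T.beats L b then b else L)) i = vz + (k : ℝ) * vL := by
    have hcong : ∀ b ∈ (S.erase L).erase z,
        rdmProb T (S.erase (if T.beats L b then b else L)) i = vL := by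
      intro b hb
      obtain ⟨h1, h2⟩ := Finset.mem_erase.mp hb
      obtain ⟨h3, _⟩ := Finset.mem_erase.mp h2
      rw [if_neg (nbLo b h1 h3)]
      exact hvL
    have hcard : ((S.erase L).erase z).card = k := by
      rw [Finset.card_erase_of_mem hzLe, Finset.card_erase_of_mem hLS, hk]
      omega
    rw [← Finset.add_sum_erase _ _ hzLe, if_pos bLz, hvz,
      Finset.sum_congr rfl hcong, Finset.sum_const, hcard, nsmul_eq_mul]
  have rowo : ∀ j ∈ (S.erase z).erase L, ∑ b ∈ S.erase j,
      rdmProb T (S.erase (if T.beats j b then b else j)) i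
      = vo + (vL + ((k - 1 : ℕ) : ℝ) * vo) := by
    intro j hj
    obtain ⟨hjS, hjz, hjL⟩ := hS2mem j hj
    have hz' : z ∈ S.erase j := Finset.mem_erase.mpr ⟨Ne.symm hjz, hzS⟩
    have hL' : L ∈ (S.erase j).erase z :=
      Finset.mem_erase.mpr ⟨Ne.symm hzL, Finset.mem_erase.mpr ⟨Ne.symm hjL, hLS⟩⟩
    have hcong : ∀ b ∈ ((S.erase j).erase z).erase L,
        rdmProb T (S.erase (if T.beats j b then b else j)) i = vo := by
      intro b hb
      obtain ⟨hbL, hb2⟩ := Finset.mem_erase.mp hb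
      obtain ⟨hbz, hb3⟩ := Finset.mem_erase.mp hb2
      obtain ⟨hbj, hbS⟩ := Finset.mem_erase.mp hb3
      by_cases hbeat : T.beats j b
      · rw [if_pos hbeat]; exact hvo b hbS hbz hbL
      · rw [if_neg hbeat]; exact hvo j hjS hjz hjL
    have hcard : (((S.erase j).erase z).erase L).card = k - 1 := by
      rw [Finset.card_erase_of_mem hL', Finset.card_erase_of_mem hz',
        Finset.card_erase_of_mem hjS, hk]
      omega
    rw [← Finset.add_sum_erase _ _ hz', ← Finset.add_sum_erase _ _ hL',
      if_neg (nboz j hjz hjL), hvo j hjS hjz hjL, if_pos (boL j hjz hjL), hvL,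
      Finset.sum_congr rfl hcong, Finset.sum_const, hcard, nsmul_eq_mul]
  rw [← Finset.add_sum_erase _ _ hzS, rowz, ← Finset.add_sum_erase _ _ hLz, rowL,
    Finset.sum_congr rfl rowo, Finset.sum_const, hS2card, nsmul_eq_mul]
  rcases Nat.eq_zero_or_pos k with h0 | h1
  · subst h0; push_cast; ring
  · have hcast : ((k - 1 : ℕ) : ℝ) = (k : ℝ) - 1 := by
      rw [Nat.cast_sub h1, Nat.cast_one]
    rw [hcast]; push_cast; ring

lemma main_lemma {n : ℕ} (hn : 3 ≤ n) (T : Tournament n)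
    (hT : ∀ i j : Fin n, T.beats i j ↔
      ((i.1 < j.1 ∧ ¬(i.1 = 0 ∧ j.1 = n - 1)) ∨ (i.1 = n - 1 ∧ j.1 = 0)))
    (z L : Fin n) (hz : z.1 = 0) (hL : L.1 = n - 1) :
    ∀ m, 2 ≤ m → ∀ S : Finset (Fin n), z ∈ S → L ∈ S → S.card = m →
      rdmProb T S z = 1 - 2 / m ∧ rdmProb T S L = 2 / (m * ((m : ℝ) - 1)) := by
  have hzL : z ≠ L := by
    intro h; rw [h, hL] at hz; omega
  have hval : ∀ j : Fin n, j ≠ z → j.1 ≠ 0 := by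
    intro j hj h; exact hj (Fin.ext (by rw [h, hz]))
  have hvalL : ∀ j : Fin n, j ≠ L → j.1 ≠ n - 1 := by
    intro j hj h; exact hj (Fin.ext (by rw [h, hL]))
  have nbzL : ¬ T.beats z L := by rw [hT z L, hz, hL]; omega
  have bLz : T.beats L z := by rw [hT L z, hz, hL]; omega
  have bzo : ∀ j : Fin n, j ≠ z → j ≠ L → T.beats z j := by
    intro j h1 h2
    have := hval j h1; have := hvalL j h2; have := j.2
    rw [hT z j, hz]; omega
  have nbLo : ∀ j : Fin n, j ≠ z → j ≠ L → ¬ T.beats L j := by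
    intro j h1 h2
    have := hval j h1; have := hvalL j h2; have := j.2
    rw [hT L j, hL]; omega
  have boL : ∀ j : Fin n, j ≠ z → j ≠ L → T.beats j L := by
    intro j h1 h2
    have := hval j h1; have := hvalL j h2; have := j.2
    rw [hT j L, hL]; omega
  have nboz : ∀ j : Fin n, j ≠ z → j ≠ L → ¬ T.beats j z := by
    intro j h1 h2
    have := hval j h1; have := hvalL j h2; have := j.2
    rw [hT j z, hz]; omega
  intro m hm
  induction m, hm using Nat.le_induction with
  | base =>
    intro S hzS hLS hc
    have hno : ∀ x ∈ S, x ≠ z → x ≠ L → False := by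
      intro x hx hxz hxL
      have hsub : ({x, z, L} : Finset (Fin n)) ⊆ S := by
        intro y hy
        simp only [Finset.mem_insert, Finset.mem_singleton] at hy
        rcases hy with rfl | rfl | rfl <;> assumption
      have h3 : ({x, z, L} : Finset (Fin n)).card = 3 := by
        rw [Finset.card_insert_of_notMem (by simp [hxz, hxL]),
          Finset.card_insert_of_notMem (by simp [hzL]), Finset.card_singleton]
      have := Finset.card_le_card hsub
      omega
    have hvz0 : rdmProb T (S.erase z) z = 0 :=
      rdm_not_mem T _ _ (Finset.notMem_erase _ _)
    have hvL1 : rdmProb T (S.erase L) z = 1 := by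
      refine rdm_condorcet T _ _ (Finset.mem_erase.mpr ⟨hzL, hzS⟩) ?_
      intro j hj hjz
      obtain ⟨hjL, _⟩ := Finset.mem_erase.mp hj
      exact bzo j hjz hjL
    have hvzL : rdmProb T (S.erase z) L = 1 := by
      refine rdm_condorcet T _ _ (Finset.mem_erase.mpr ⟨Ne.symm hzL, hLS⟩) ?_
      intro j hj hjL
      obtain ⟨hjz, hjS⟩ := Finset.mem_erase.mp hj
      exact absurd (hno j hjS hjz hjL) (by simp)
    have hvLL : rdmProb T (S.erase L) L = 0 :=
      rdm_not_mem T _ _ (Finset.notMem_erase _ _)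
    constructor
    · rw [rdm_rec T S z (by omega),
        sum_formula T z L hzL nbzL bLz bzo nbLo boL nboz S hzS hLS 0 (by omega)
          z 0 1 0 hvz0 hvL1 (fun x hx h1 h2 => (hno x hx h1 h2).elim), hc]
      norm_num
    · rw [rdm_rec T S L (by omega),
        sum_formula T z L hzL nbzL bLz bzo nbLo boL nboz S hzS hLS 0 (by omega)
          L 1 0 0 hvzL hvLL (fun x hx h1 h2 => (hno x hx h1 h2).elim), hc]
      norm_num
  | succ m hm ih =>
    intro S hzS hLS hc
    have hm0 : (m : ℝ) ≠ 0 := by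
      have : (0 : ℝ) < m := by exact_mod_cast Nat.lt_of_lt_of_le (by norm_num) hm
      exact this.ne'
    have hm1 : (m : ℝ) - 1 ≠ 0 := by
      have : (2 : ℝ) ≤ m := by exact_mod_cast hm
      intro h; linarith
    have hm2 : (m : ℝ) + 1 ≠ 0 := by positivity
    have hcastm : ((m - 1 : ℕ) : ℝ) = (m : ℝ) - 1 := by
      rw [Nat.cast_sub (by omega), Nat.cast_one]
    have hvo_z : ∀ x ∈ S, x ≠ z → x ≠ L →
        rdmProb T (S.erase x) z = 1 - 2 / m := by
      intro x hx h1 h2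
      exact (ih (S.erase x) (Finset.mem_erase.mpr ⟨Ne.symm h1, hzS⟩)
        (Finset.mem_erase.mpr ⟨Ne.symm h2, hLS⟩)
        (by rw [Finset.card_erase_of_mem hx, hc]; omega)).1
    have hvo_L : ∀ x ∈ S, x ≠ z → x ≠ L →
        rdmProb T (S.erase x) L = 2 / (m * ((m : ℝ) - 1)) := by
      intro x hx h1 h2
      exact (ih (S.erase x) (Finset.mem_erase.mpr ⟨Ne.symm h1, hzS⟩)
        (Finset.mem_erase.mpr ⟨Ne.symm h2, hLS⟩)
        (by rw [Finset.card_erase_of_mem hx, hc]; omega)).2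
    have hvz_z : rdmProb T (S.erase z) z = 0 :=
      rdm_not_mem T _ _ (Finset.notMem_erase _ _)
    have hvL_z : rdmProb T (S.erase L) z = 1 := by
      refine rdm_condorcet T _ _ (Finset.mem_erase.mpr ⟨hzL, hzS⟩) ?_
      intro j hj hjz
      obtain ⟨hjL, _⟩ := Finset.mem_erase.mp hj
      exact bzo j hjz hjL
    have hvz_L : rdmProb T (S.erase z) L = 0 := by
      refine rdm_loser T _ _ (Finset.mem_erase.mpr ⟨Ne.symm hzL, hLS⟩) ?_ ?_
      · rw [Finset.card_erase_of_mem hzS, hc]; omega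
      · intro j hj hjL
        obtain ⟨hjz, _⟩ := Finset.mem_erase.mp hj
        exact boL j hjz hjL
    have hvL_L : rdmProb T (S.erase L) L = 0 :=
      rdm_not_mem T _ _ (Finset.notMem_erase _ _)
    constructor
    · rw [rdm_rec T S z (by omega),
        sum_formula T z L hzL nbzL bLz bzo nbLo boL nboz S hzS hLS (m - 1)
          (by omega) z 0 1 (1 - 2 / m) hvz_z hvL_z hvo_z, hc]
      simp only [Nat.add_sub_cancel, hcastm]
      push_cast
      field_simp
      ring
    · rw [rdm_rec T S L (by omega),
        sum_formula T z L hzL nbzL bLz bzo nbLo boL nboz S hzS hLS (m - 1)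
          (by omega) L 0 0 (2 / (m * ((m : ℝ) - 1))) hvz_L hvL_L hvo_L, hc]
      simp only [Nat.add_sub_cancel, hcastm]
      push_cast
      field_simp
      ring_nf
      rw [pow_two, mul_assoc, mul_inv_cancel₀ hm0, mul_one]

/-- In the superman-kryptonite tournament on `n` agents, under the Randomized
Death Match rule the superman (agent `0`) wins with probability `1 - 2/n` and the
kryptonite (agent `n-1`) wins with probability `2/(n(n-1))`. -/
theorem stmt13 {n : ℕ} (hn : 3 ≤ n) (T : Tournament n)
    (hT : ∀ i j : Fin n, T.beats i j ↔
      ((i.1 < j.1 ∧ ¬(i.1 = 0 ∧ j.1 = n - 1)) ∨ (i.1 = n - 1 ∧ j.1 = 0))) :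
    rdmProb T Finset.univ ⟨0, by omega⟩ = 1 - 2 / n ∧
    rdmProb T Finset.univ ⟨n - 1, by omega⟩ = 2 / (n * (n - 1)) := by
  have h := main_lemma hn T hT ⟨0, by omega⟩ ⟨n - 1, by omega⟩ rfl rfl n (by omega)
    Finset.univ (Finset.mem_univ _) (Finset.mem_univ _) (by simp)
  exact h
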